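/- In the single-hint model with v_t ≡ 1 for all t, there is a universal constant c > 0 (independent of T and L) such that for every horizon T ≥ 1, every L ∈ [1, T], every q ∈ [1, ∞), and every policy π, there exists an admissible (possibly random) sequence {m_t, h_t} with accuracy parameters σ_t satisfying E[|h_t − m_t|^q] ≤ σ_t^q for all t and Σ_{t=1}^T σ_t ≤ L (the σ_t not revealed to the bidder), such that Reg(π) ≥ c·(T·L)^{1/4}. -/

import Mathlib

noncomputable section

/-- Reward of bidding `b` in a first-price auction with private value `v` and
others' highest bid `m`: the bidder wins iff `b ≥ m`, paying her bid. -/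
def reward (v b m : ℝ) : ℝ := if m ≤ b then v - b else 0

/-- The oracle class `F`: nondecreasing 1-Lipschitz functions from `[0,1]` to `[0,1]`. -/
def IsOracle (a : ℝ → ℝ) : Prop :=
  MonotoneOn a (Set.Icc 0 1) ∧ LipschitzOnWith 1 a (Set.Icc 0 1) ∧
    Set.MapsTo a (Set.Icc 0 1) (Set.Icc 0 1)

/-- An environment for `T` rounds of repeated first-price auctions: a probability
space carrying the (jointly random) others' highest bids `m t` and hints `h t`,
together with deterministic private values `v t` and hint accuracies `σ t`
(in the single-hint model the `σ t` exist but are not revealed to the bidder). -/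
structure Env (T : ℕ) where
  Ω : Type
  [ms : MeasurableSpace Ω]
  μ : MeasureTheory.Measure Ω
  prob : MeasureTheory.IsProbabilityMeasure μ
  v : Fin T → ℝ
  m : Fin T → Ω → ℝ
  h : Fin T → Ω → ℝ
  σ : Fin T → ℝ
  v_mem : ∀ t, v t ∈ Set.Icc (0 : ℝ) 1
  m_mem : ∀ t ω, m t ω ∈ Set.Icc (0 : ℝ) 1
  h_mem : ∀ t ω, h t ω ∈ Set.Icc (0 : ℝ) 1
  σ_mem : ∀ t, σ t ∈ Set.Icc (0 : ℝ) 1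
  m_meas : ∀ t, Measurable (m t)
  h_meas : ∀ t, Measurable (h t)

/-- A randomized bidding policy in the single-hint model: at round `t` the bid may
depend on the private values `v_1,…,v_t`, the hints `h_1,…,h_t`, the past highest
bids `m_1,…,m_{t−1}`, and internal randomness `ω` — but NOT on the accuracies `σ`. -/
structure Policy (T : ℕ) where
  Ω : Type
  [ms : MeasurableSpace Ω]
  μ : MeasureTheory.Measure Ω
  prob : MeasureTheory.IsProbabilityMeasure μ
  bid : Fin T → (Fin T → ℝ) → (Fin T → ℝ) → (Fin T → ℝ) → Ω → ℝ
  bid_mem : ∀ t v h m ω, bid t v h m ω ∈ Set.Icc (0 : ℝ) 1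
  bid_meas : ∀ t v h m, Measurable fun ω => bid t v h m ω
  adapted : ∀ (t : Fin T) (v v' h h' m m' : Fin T → ℝ) (ω : Ω),
    (∀ s, s ≤ t → v s = v' s) → (∀ s, s ≤ t → h s = h' s) →
    (∀ s, s < t → m s = m' s) →
    bid t v h m ω = bid t v' h' m' ω

open MeasureTheory

/-- The admissibility condition `E[|h_t − m_t|^q] ≤ σ_t^q` for every round `t`. -/
def Admissible {T : ℕ} (env : Env T) (q : ℝ) : Prop :=
  letI := env.ms
  ∀ t, (∫ ω, |env.h t ω - env.m t ω| ^ q ∂env.μ) ≤ (env.σ t) ^ q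

/-- Expected cumulative reward of a policy in a given environment (expectation over
both the environment randomness and the policy's internal randomness). -/
def policyGain {T : ℕ} (π : Policy T) (env : Env T) : ℝ :=
  letI := env.ms
  letI := π.ms
  ∑ t : Fin T, ∫ ω : env.Ω × π.Ω,
    reward (env.v t)
      (π.bid t env.v (fun s => env.h s ω.1) (fun s => env.m s ω.1) ω.2)
      (env.m t ω.1) ∂(env.μ.prod π.μ)

/-- Expected cumulative reward of an oracle `a : [0,1] → [0,1]`. -/
def oracleGain {T : ℕ} (a : ℝ → ℝ) (env : Env T) : ℝ :=
  letI := env.ms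
  ∑ t : Fin T, ∫ ω, reward (env.v t) (a (env.v t)) (env.m t ω) ∂env.μ

/-- Regret of a policy: best oracle cumulative expected reward minus the policy's
cumulative expected reward. -/
def Regret {T : ℕ} (π : Policy T) (env : Env T) : ℝ :=
  (⨆ a : {a : ℝ → ℝ // IsOracle a}, oracleGain a.1 env) - policyGain π env

open Finset

namespace Thm2Aux

variable (ρ : ℝ)

/-- weight of one coordinate -/
def cw (b : Bool) : ℝ := if b then ρ else 1 - ρ

/-- product Bernoulli weight on the cube -/
def CW {n : ℕ} (ξ : Fin n → Bool) : ℝ := ∏ t, cw ρ (ξ t)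

/-- centered coordinate -/
def cx (b : Bool) : ℝ := (if b then 1 else 0) - ρ

/-- centered sum -/
def CX {n : ℕ} (ξ : Fin n → Bool) : ℝ := ∑ t, cx ρ (ξ t)

variable {ρ}


@[simp] lemma cw_true : cw ρ true = ρ := by simp [cw]
@[simp] lemma cw_false : cw ρ false = 1 - ρ := by simp [cw]
@[simp] lemma cx_true : cx ρ true = 1 - ρ := by simp [cx]
@[simp] lemma cx_false : cx ρ false = -ρ := by simp [cx]

lemma cw_nonneg (h0 : 0 ≤ ρ) (h1 : ρ ≤ 1) (b : Bool) : 0 ≤ cw ρ b := by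
  cases b <;> simp [cw] <;> linarith

lemma CW_nonneg (h0 : 0 ≤ ρ) (h1 : ρ ≤ 1) {n : ℕ} (ξ : Fin n → Bool) : 0 ≤ CW ρ ξ :=
  Finset.prod_nonneg fun t _ => cw_nonneg h0 h1 _

lemma sum_cube_succ {n : ℕ} (F : (Fin (n+1) → Bool) → ℝ) :
    ∑ ξ : Fin (n+1) → Bool, F ξ = ∑ b : Bool, ∑ η : Fin n → Bool, F (Fin.cons b η) := by
  rw [← (Fin.consEquiv (fun _ => Bool)).sum_comp F]
  rw [Fintype.sum_prod_type]
  rfl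

lemma CW_cons {n : ℕ} (b : Bool) (η : Fin n → Bool) :
    CW ρ (Fin.cons b η) = cw ρ b * CW ρ η := by
  simp [CW, Fin.prod_univ_succ]

lemma CX_cons {n : ℕ} (b : Bool) (η : Fin n → Bool) :
    CX ρ (Fin.cons b η) = cx ρ b + CX ρ η := by
  simp [CX, Fin.sum_univ_succ]

lemma sum_CW {n : ℕ} : ∑ ξ : Fin n → Bool, CW ρ ξ = 1 := by
  induction n with
  | zero => simp [CW]
  | succ n ih =>
      rw [sum_cube_succ (CW ρ)]
      simp only [CW_cons]
      rw [Fintype.sum_bool]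
      rw [← Finset.mul_sum, ← Finset.mul_sum, ih]
      simp [cw]

lemma sum_CW_CX {n : ℕ} : ∑ ξ : Fin n → Bool, CW ρ ξ * CX ρ ξ = 0 := by
  induction n with
  | zero => simp [CX]
  | succ n ih =>
      rw [sum_cube_succ (fun ξ => CW ρ ξ * CX ρ ξ)]
      simp only [CW_cons, CX_cons]
      have expand : ∀ b : Bool, ∑ η : Fin n → Bool,
          (cw ρ b * CW ρ η) * (cx ρ b + CX ρ η)
          = cw ρ b * cx ρ b * (∑ η : Fin n → Bool, CW ρ η)
            + cw ρ b * (∑ η : Fin n → Bool, CW ρ η * CX ρ η) := by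
        intro b
        rw [Finset.mul_sum, Finset.mul_sum, ← Finset.sum_add_distrib]
        exact Finset.sum_congr rfl fun η _ => by ring
      rw [Fintype.sum_bool, expand, expand, sum_CW, ih]
      simp [cw, cx]; ring

lemma sum_CW_CX_sq {n : ℕ} (h0 : 0 ≤ ρ) (h1 : ρ ≤ 1) :
    ∑ ξ : Fin n → Bool, CW ρ ξ * (CX ρ ξ)^2 = n * (ρ * (1 - ρ)) := by
  induction n with
  | zero => simp [CX]
  | succ n ih =>
      rw [sum_cube_succ (fun ξ => CW ρ ξ * (CX ρ ξ)^2)]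
      simp only [CW_cons, CX_cons]
      have expand : ∀ b : Bool, ∑ η : Fin n → Bool,
          (cw ρ b * CW ρ η) * (cx ρ b + CX ρ η)^2
          = cw ρ b * (cx ρ b)^2 * (∑ η : Fin n → Bool, CW ρ η)
            + 2 * cw ρ b * cx ρ b * (∑ η : Fin n → Bool, CW ρ η * CX ρ η)
            + cw ρ b * (∑ η : Fin n → Bool, CW ρ η * (CX ρ η)^2) := by
        intro b
        rw [Finset.mul_sum, Finset.mul_sum, Finset.mul_sum, ← Finset.sum_add_distrib,
          ← Finset.sum_add_distrib]
        exact Finset.sum_congr rfl fun η _ => by ring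
      rw [Fintype.sum_bool, expand, expand, sum_CW, ih, sum_CW_CX]
      simp only [cw_true, cw_false, cx_true, cx_false]
      push_cast
      ring

lemma sum_CW_CX_four {n : ℕ} (h0 : 0 ≤ ρ) (h1 : ρ ≤ 1) :
    ∑ ξ : Fin n → Bool, CW ρ ξ * (CX ρ ξ)^4
      ≤ 3 * (n * (ρ * (1 - ρ)))^2 + n * (ρ * (1 - ρ)) := by
  induction n with
  | zero => simp [CX]
  | succ n ih =>
      rw [sum_cube_succ (fun ξ => CW ρ ξ * (CX ρ ξ)^4)]
      simp only [CW_cons, CX_cons]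
      have expand : ∀ b : Bool, ∑ η : Fin n → Bool,
          (cw ρ b * CW ρ η) * (cx ρ b + CX ρ η)^4
          = cw ρ b * (cx ρ b)^4 * (∑ η : Fin n → Bool, CW ρ η)
            + 4 * cw ρ b * (cx ρ b)^3 * (∑ η : Fin n → Bool, CW ρ η * CX ρ η)
            + 6 * cw ρ b * (cx ρ b)^2 * (∑ η : Fin n → Bool, CW ρ η * (CX ρ η)^2)
            + 4 * cw ρ b * cx ρ b * (∑ η : Fin n → Bool, CW ρ η * (CX ρ η)^3)
            + cw ρ b * (∑ η : Fin n → Bool, CW ρ η * (CX ρ η)^4) := by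
        intro b
        rw [Finset.mul_sum, Finset.mul_sum, Finset.mul_sum, Finset.mul_sum, Finset.mul_sum,
          ← Finset.sum_add_distrib, ← Finset.sum_add_distrib, ← Finset.sum_add_distrib,
          ← Finset.sum_add_distrib]
        exact Finset.sum_congr rfl fun η _ => by ring
      rw [Fintype.sum_bool, expand, expand, sum_CW, sum_CW_CX, sum_CW_CX_sq h0 h1]
      have hσ4 : ρ * (1 - ρ)^4 + (1 - ρ) * (-ρ)^4 ≤ ρ * (1 - ρ) := by
        nlinarith [mul_nonneg h0 (sub_nonneg.2 h1), sq_nonneg ρ, sq_nonneg (1 - ρ),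
          mul_nonneg (mul_nonneg h0 h0) (sub_nonneg.2 h1),
          mul_nonneg (mul_nonneg h0 (sub_nonneg.2 h1)) (sub_nonneg.2 h1)]
      simp only [cw_true, cw_false, cx_true, cx_false]
      push_cast
      nlinarith [ih, hσ4, sq_nonneg (ρ * (1 - ρ))]

end Thm2Aux


open Finset

namespace Thm2Aux

section Comb
variable {T : ℕ}

/-- number of raw spikes strictly before `t` -/
def rawB (ξ : Fin T → Bool) (t : Fin T) : ℕ :=
  (Finset.univ.filter fun s => s < t ∧ ξ s = true).card

/-- total number of raw spikes -/
def rawN (ξ : Fin T → Bool) : ℕ := (Finset.univ.filter fun s => ξ s = true).card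

/-- round `t` is an effective spike -/
def effQ (M : ℕ) (ξ : Fin T → Bool) (t : Fin T) : Prop := ξ t = true ∧ rawB ξ t < M

instance (M : ℕ) (ξ : Fin T → Bool) (t : Fin T) : Decidable (effQ M ξ t) := by
  unfold effQ; infer_instance

/-- the value of the others' bid at round `t` -/
def mv (ρ : ℝ) (M : ℕ) (ξ : Fin T → Bool) (t : Fin T) : ℝ := if effQ M ξ t then ρ else 0

/-- number of effective spikes -/
def effN (M : ℕ) (ξ : Fin T → Bool) : ℕ := (Finset.univ.filter fun t => effQ M ξ t).card

variable {ρ : ℝ} {M : ℕ}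

lemma mv_nonneg (h0 : 0 ≤ ρ) (ξ : Fin T → Bool) (t : Fin T) : 0 ≤ mv ρ M ξ t := by
  unfold mv; split <;> simp [h0]

lemma mv_le_one (h1 : ρ ≤ 1) (ξ : Fin T → Bool) (t : Fin T) : mv ρ M ξ t ≤ 1 := by
  unfold mv; split <;> linarith

lemma mv_le_rho (h0 : 0 ≤ ρ) (ξ : Fin T → Bool) (t : Fin T) : mv ρ M ξ t ≤ ρ := by
  unfold mv; split <;> linarith

lemma rawB_congr {ξ ξ' : Fin T → Bool} {t : Fin T} (h : ∀ s, s < t → ξ s = ξ' s) :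
    rawB ξ t = rawB ξ' t := by
  unfold rawB
  congr 1
  apply Finset.filter_congr
  intro s _
  constructor
  · rintro ⟨hst, hs⟩; exact ⟨hst, (h s hst) ▸ hs⟩
  · rintro ⟨hst, hs⟩; exact ⟨hst, (h s hst).symm ▸ hs⟩

lemma mv_congr {ξ ξ' : Fin T → Bool} {t : Fin T} (h : ∀ s, s ≤ t → ξ s = ξ' s) :
    mv ρ M ξ t = mv ρ M ξ' t := by
  have h1 : rawB ξ t = rawB ξ' t := rawB_congr (fun s hs => h s hs.le)
  have h2 : ξ t = ξ' t := h t le_rfl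
  simp only [mv, effQ, h1, h2]

lemma rawB_lt_rawB {ξ : Fin T → Bool} {s t : Fin T} (hst : s < t) (hs : ξ s = true) :
    rawB ξ s < rawB ξ t := by
  apply Finset.card_lt_card
  rw [Finset.ssubset_iff_of_subset]
  · exact ⟨s, Finset.mem_filter.2 ⟨Finset.mem_univ _, hst, hs⟩,
      fun hmem => absurd (Finset.mem_filter.1 hmem).2.1 (lt_irrefl s)⟩
  · intro u hu
    rcases Finset.mem_filter.1 hu with ⟨_, hus, hu2⟩
    exact Finset.mem_filter.2 ⟨Finset.mem_univ _, hus.trans hst, hu2⟩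

lemma rawB_le_rawN (ξ : Fin T → Bool) (t : Fin T) : rawB ξ t ≤ rawN ξ := by
  apply Finset.card_le_card
  intro s hs
  exact Finset.mem_filter.2 ⟨Finset.mem_univ _, (Finset.mem_filter.1 hs).2.2⟩

lemma effN_le_rawN (ξ : Fin T → Bool) : effN M ξ ≤ rawN ξ := by
  apply Finset.card_le_card
  intro s hs
  exact Finset.mem_filter.2 ⟨Finset.mem_univ _, (Finset.mem_filter.1 hs).2.1⟩

lemma rawN_le (ξ : Fin T → Bool) : rawN ξ ≤ T := by
  simpa [rawN] using Finset.card_le_card (Finset.filter_subset _ (univ : Finset (Fin T)))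

lemma effN_le_M (ξ : Fin T → Bool) : effN M ξ ≤ M := by
  have h := Finset.card_le_card_of_injOn (fun t => rawB ξ t)
    (s := Finset.univ.filter fun t => effQ M ξ t) (t := Finset.range M)
    (fun t ht => Finset.mem_range.2 (Finset.mem_filter.1 ht).2.2)
    (by
      intro s hs t ht hst
      by_contra hne
      rcases lt_or_gt_of_ne hne with h | h
      · exact absurd hst (Nat.ne_of_lt (rawB_lt_rawB h (Finset.mem_filter.1 hs).2.1))
      · exact absurd hst.symm (Nat.ne_of_lt (rawB_lt_rawB h (Finset.mem_filter.1 ht).2.1)))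
  simpa [effN] using h

lemma sum_mv (ξ : Fin T → Bool) : ∑ t, mv ρ M ξ t = ρ * effN M ξ := by
  unfold mv effN
  rw [Finset.sum_ite, Finset.sum_const, Finset.sum_const]
  simp [mul_comm]

end Comb

end Thm2Aux

namespace Thm2Aux
open MeasureTheory Finset

section Envs

lemma reward_meas (m : ℝ) : Measurable fun b : ℝ => reward 1 b m := by
  unfold reward
  exact Measurable.ite (measurableSet_le measurable_const measurable_id)
    (measurable_const.sub measurable_id) measurable_const

lemma reward_le_one {b m : ℝ} (hb : 0 ≤ b) : reward 1 b m ≤ 1 := by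
  unfold reward; split <;> linarith

lemma reward_nonneg {b m : ℝ} (hb : b ≤ 1) : 0 ≤ reward 1 b m := by
  unfold reward; split <;> linarith

variable {T : ℕ} (π : Policy T) (ρ : ℝ) (M : ℕ)

/-- the deterministic environment associated to a spike pattern `ξ` -/
def envOf (h0 : 0 ≤ ρ) (h1 : ρ ≤ 1) (ξ : Fin T → Bool) : Env T where
  Ω := Unit
  ms := inferInstance
  μ := Measure.dirac ()
  prob := inferInstance
  v := fun _ => 1
  m := fun t _ => mv ρ M ξ t
  h := fun _ _ => 0
  σ := fun t => mv ρ M ξ t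
  v_mem := fun _ => by constructor <;> norm_num
  m_mem := fun t _ => ⟨mv_nonneg h0 ξ t, mv_le_one h1 ξ t⟩
  h_mem := fun _ _ => by constructor <;> norm_num
  σ_mem := fun t => ⟨mv_nonneg h0 ξ t, mv_le_one h1 ξ t⟩
  m_meas := fun _ => measurable_const
  h_meas := fun _ => measurable_const

/-- the bid of the policy at round `t` against pattern `ξ` -/
def bidf (ξ : Fin T → Bool) (t : Fin T) (ω : π.Ω) : ℝ :=
  π.bid t (fun _ => 1) (fun _ => 0) (fun s => mv ρ M ξ s) ω

/-- expected reward of the policy at round `t` -/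
def gfun (ξ : Fin T → Bool) (t : Fin T) : ℝ :=
  letI := π.ms
  ∫ ω, reward 1 (bidf π ρ M ξ t ω) (mv ρ M ξ t) ∂π.μ

/-- total expected reward of the policy -/
def Gfun (ξ : Fin T → Bool) : ℝ := ∑ t, gfun π ρ M ξ t

lemma integrable_reward_bid (ξ : Fin T → Bool) (t : Fin T) (m0 : ℝ) :
    letI := π.ms
    Integrable (fun ω => reward 1 (bidf π ρ M ξ t ω) m0) π.μ := by
  letI := π.ms
  haveI := π.prob
  have hmeas : Measurable fun ω => reward 1 (bidf π ρ M ξ t ω) m0 :=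
    (reward_meas m0).comp (π.bid_meas t _ _ _)
  refine (integrable_const (1 : ℝ)).mono' hmeas.aestronglyMeasurable (ae_of_all _ fun ω => ?_)
  have hb := π.bid_mem t (fun _ => 1) (fun _ => 0) (fun s => mv ρ M ξ s) ω
  rw [Real.norm_eq_abs, abs_le]
  exact ⟨by have := reward_nonneg (b := bidf π ρ M ξ t ω) (m := m0) hb.2; linarith,
    reward_le_one hb.1⟩

lemma policyGain_eq (h0 : 0 ≤ ρ) (h1 : ρ ≤ 1) (ξ : Fin T → Bool) :
    policyGain π (envOf ρ M h0 h1 ξ) = Gfun π ρ M ξ := by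
  letI := π.ms
  haveI := π.prob
  apply Finset.sum_congr rfl
  intro t _
  show ∫ ω : Unit × π.Ω,
      reward 1 (π.bid t (fun _ => 1) (fun _ => 0) (fun s => mv ρ M ξ s) ω.2) (mv ρ M ξ t)
      ∂((Measure.dirac ()).prod π.μ) = _
  have hmeas : Measurable fun p : Unit × π.Ω =>
      reward 1 (π.bid t (fun _ => 1) (fun _ => 0) (fun s => mv ρ M ξ s) p.2) (mv ρ M ξ t) :=
    (reward_meas _).comp ((π.bid_meas t _ _ _).comp measurable_snd)
  rw [Measure.dirac_prod, integral_map measurable_prodMk_left.aemeasurable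
    hmeas.aestronglyMeasurable]
  rfl

lemma oracleGain_eval (h0 : 0 ≤ ρ) (h1 : ρ ≤ 1) (ξ : Fin T → Bool) (a : ℝ → ℝ) :
    oracleGain a (envOf ρ M h0 h1 ξ) = ∑ t, reward 1 (a 1) (mv ρ M ξ t) := by
  apply Finset.sum_congr rfl
  intro t _
  show ∫ _ : Unit, reward 1 (a 1) (mv ρ M ξ t) ∂(Measure.dirac ()) = _
  haveI : IsProbabilityMeasure (Measure.dirac () : Measure Unit) := inferInstance
  rw [integral_const]
  simp

lemma isOracle_const {c : ℝ} (hc0 : 0 ≤ c) (hc1 : c ≤ 1) : IsOracle fun _ => c := by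
  refine ⟨monotoneOn_const, fun x _ y _ => by simp, fun x _ => ⟨hc0, hc1⟩⟩

lemma oracle_bdd (h0 : 0 ≤ ρ) (h1 : ρ ≤ 1) (ξ : Fin T → Bool) :
    BddAbove (Set.range fun a : {a : ℝ → ℝ // IsOracle a} =>
      oracleGain a.1 (envOf ρ M h0 h1 ξ)) := by
  refine ⟨(T : ℝ), ?_⟩
  rintro x ⟨a, rfl⟩
  show oracleGain a.1 (envOf ρ M h0 h1 ξ) ≤ (T : ℝ)
  rw [oracleGain_eval]
  have hbound : ∀ t : Fin T, reward 1 (a.1 1) (mv ρ M ξ t) ≤ 1 := by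
    intro t
    have h1mem : (1 : ℝ) ∈ Set.Icc (0:ℝ) 1 := ⟨zero_le_one, le_rfl⟩
    exact reward_le_one (a.2.2.2 h1mem).1
  calc ∑ t, reward 1 (a.1 1) (mv ρ M ξ t) ≤ ∑ _t : Fin T, (1:ℝ) :=
        Finset.sum_le_sum fun t _ => hbound t
    _ = T := by simp

lemma gain_zero (hpos : 0 < ρ) (h1 : ρ ≤ 1) (ξ : Fin T → Bool) :
    oracleGain (fun _ => 0) (envOf ρ M hpos.le h1 ξ) = (T : ℝ) - effN M ξ := by
  rw [oracleGain_eval]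
  have : ∀ t : Fin T, reward 1 0 (mv ρ M ξ t) = 1 - (if effQ M ξ t then (1:ℝ) else 0) := by
    intro t
    unfold reward mv
    by_cases h : effQ M ξ t
    · rw [if_pos h, if_pos h, if_neg (by linarith)]; norm_num
    · rw [if_neg h, if_neg h, if_pos le_rfl]
  rw [Finset.sum_congr rfl fun t _ => this t, Finset.sum_sub_distrib]
  unfold effN
  rw [Finset.sum_boole]
  simp

lemma gain_rho (h0 : 0 ≤ ρ) (h1 : ρ ≤ 1) (ξ : Fin T → Bool) :
    oracleGain (fun _ => ρ) (envOf ρ M h0 h1 ξ) = (1 - ρ) * T := by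
  rw [oracleGain_eval]
  have : ∀ t : Fin T, reward 1 ρ (mv ρ M ξ t) = 1 - ρ := by
    intro t
    unfold reward
    rw [if_pos (mv_le_rho h0 ξ t)]
  rw [Finset.sum_congr rfl fun t _ => this t]
  simp [mul_comm]
  ring

lemma regret_ge (hpos : 0 < ρ) (h1 : ρ ≤ 1) (ξ : Fin T → Bool) :
    (1 - ρ) * T + max (ρ * T - rawN ξ) 0 - Gfun π ρ M ξ
      ≤ Regret π (envOf ρ M hpos.le h1 ξ) := by
  unfold Regret
  rw [policyGain_eq]
  apply sub_le_sub_right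
  rcases le_or_gt (ρ * T - rawN ξ) 0 with h | h
  · rw [max_eq_right h, add_zero]
    have := le_ciSup (oracle_bdd ρ M hpos.le h1 ξ)
      ⟨fun _ => ρ, isOracle_const hpos.le h1⟩
    rw [gain_rho] at this
    exact this
  · rw [max_eq_left h.le]
    have hle := le_ciSup (oracle_bdd ρ M hpos.le h1 ξ)
      ⟨fun _ => (0:ℝ), isOracle_const le_rfl zero_le_one⟩
    rw [gain_zero ρ M hpos h1 ξ] at hle
    refine le_trans ?_ hle
    have hcast : (effN M ξ : ℝ) ≤ (rawN ξ : ℝ) := Nat.cast_le.2 (effN_le_rawN ξ)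
    linarith

end Envs

end Thm2Aux
namespace Thm2Aux
open MeasureTheory Finset

section Pairing

variable {T : ℕ} (π : Policy T) (ρ : ℝ) (M : ℕ)

lemma point_core {β : ℝ} (h0 : 0 ≤ ρ) (h1 : ρ ≤ 1) (hβ0 : 0 ≤ β) (hβ1 : β ≤ 1) :
    (1 - ρ) * reward 1 β 0 + ρ * reward 1 β ρ ≤ 1 - ρ := by
  unfold reward
  rw [if_pos hβ0]
  by_cases h : ρ ≤ β
  · rw [if_pos h]; nlinarith
  · rw [if_neg h]; nlinarith

lemma comb_le (c1 c2 C : ℝ) (hc1 : 0 ≤ c1) (hc2 : 0 ≤ c2) (f1 f2 : π.Ω → ℝ)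
    (hf1 : letI := π.ms; Integrable f1 π.μ) (hf2 : letI := π.ms; Integrable f2 π.μ)
    (hpt : ∀ ω, c1 * f1 ω + c2 * f2 ω ≤ C) :
    (letI := π.ms; c1 * ∫ ω, f1 ω ∂π.μ + c2 * ∫ ω, f2 ω ∂π.μ) ≤ C := by
  letI := π.ms
  haveI := π.prob
  have h1 : c1 * ∫ ω, f1 ω ∂π.μ + c2 * ∫ ω, f2 ω ∂π.μ
      = ∫ ω, (c1 * f1 ω + c2 * f2 ω) ∂π.μ := by
    rw [integral_add (hf1.const_mul c1) (hf2.const_mul c2), integral_const_mul,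
      integral_const_mul]
  rw [h1]
  calc ∫ ω, (c1 * f1 ω + c2 * f2 ω) ∂π.μ ≤ ∫ _ω, C ∂π.μ :=
        integral_mono ((hf1.const_mul c1).add (hf2.const_mul c2)) (integrable_const C)
          (fun ω => hpt ω)
    _ = C := by rw [integral_const]; simp

lemma bidf_flip (ξ : Fin T → Bool) (t : Fin T) (ω : π.Ω) :
    bidf π ρ M ξ t ω = bidf π ρ M (Function.update ξ t true) t ω := by
  apply π.adapted t _ _ _ _ _ _ ω (fun s _ => rfl) (fun s _ => rfl)
  intro s hs
  apply mv_congr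
  intro u hu
  exact (Function.update_of_ne (ne_of_lt (lt_of_le_of_lt hu hs)) true ξ).symm

lemma pair_core (h0 : 0 ≤ ρ) (h1 : ρ ≤ 1) (ξ : Fin T → Bool) (t : Fin T)
    (hf : ξ t = false) :
    (1 - ρ) * gfun π ρ M ξ t + ρ * gfun π ρ M (Function.update ξ t true) t
      ≤ (1 - ρ) + ρ * (if M ≤ rawB ξ t then (1:ℝ) else 0) := by
  have hmξ : mv ρ M ξ t = 0 := by
    unfold mv
    exact if_neg (by simp [effQ, hf])
  have hraw : rawB (Function.update ξ t true) t = rawB ξ t :=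
    (rawB_congr fun s hs => (Function.update_of_ne (ne_of_lt hs) true ξ).symm).symm
  by_cases hcap : rawB ξ t < M
  · have hmξ' : mv ρ M (Function.update ξ t true) t = ρ := by
      unfold mv
      exact if_pos ⟨Function.update_self t true ξ, by rw [hraw]; exact hcap⟩
    rw [if_neg (not_le.2 hcap), mul_zero, add_zero]
    unfold gfun
    rw [hmξ, hmξ']
    apply comb_le π _ _ _ (by linarith) h0 _ _
      (integrable_reward_bid π ρ M ξ t 0)
      (integrable_reward_bid π ρ M (Function.update ξ t true) t ρ)
    intro ω
    rw [← bidf_flip]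
    have hb := π.bid_mem t (fun _ => 1) (fun _ => 0) (fun s => mv ρ M ξ s) ω
    exact point_core ρ h0 h1 hb.1 hb.2
  · have hmξ' : mv ρ M (Function.update ξ t true) t = 0 := by
      unfold mv
      refine if_neg ?_
      rw [effQ, hraw]
      tauto
    rw [if_pos (not_lt.1 hcap), mul_one]
    unfold gfun
    rw [hmξ, hmξ']
    apply comb_le π _ _ _ (by linarith) h0 _ _
      (integrable_reward_bid π ρ M ξ t 0)
      (integrable_reward_bid π ρ M (Function.update ξ t true) t 0)
    intro ω
    rw [← bidf_flip]
    have hb := π.bid_mem t (fun _ => 1) (fun _ => 0) (fun s => mv ρ M ξ s) ω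
    have h01 : reward 1 (bidf π ρ M ξ t ω) 0 ≤ 1 := reward_le_one hb.1
    have h00 : 0 ≤ reward 1 (bidf π ρ M ξ t ω) 0 := reward_nonneg hb.2
    nlinarith

/-- flip the `t`-th coordinate in a sum over patterns with `ξ t = false` -/
lemma sum_flip (t : Fin T) (F : (Fin T → Bool) → ℝ) :
    ∑ ξ ∈ univ.filter (fun ξ : Fin T → Bool => ¬ (ξ t = false)), F ξ
      = ∑ ξ ∈ univ.filter (fun ξ : Fin T → Bool => ξ t = false),
          F (Function.update ξ t true) := by
  apply Finset.sum_nbij' (i := fun ξ => Function.update ξ t false)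
    (j := fun ξ => Function.update ξ t true)
  · intro a ha
    simp [Function.update_self]
  · intro a ha
    simp [Function.update_self]
  · intro a ha
    have hat : a t = true := by
      have := (Finset.mem_filter.1 ha).2
      simpa using this
    funext s
    by_cases hst : s = t
    · subst hst; simp [Function.update_self, hat]
    · simp [Function.update_of_ne hst]
  · intro a ha
    have hat : a t = false := (Finset.mem_filter.1 ha).2
    funext s
    by_cases hst : s = t
    · subst hst; simp [Function.update_self, hat]
    · simp [Function.update_of_ne hst]
  · intro a ha
    have hat : a t = true := by
      have := (Finset.mem_filter.1 ha).2
      simpa using this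
    congr 1
    funext s
    by_cases hst : s = t
    · subst hst; simp [Function.update_self, hat]
    · simp [Function.update_of_ne hst]

lemma CW_split (h0 : 0 ≤ ρ) (h1 : ρ ≤ 1) (t : Fin T) (ξ : Fin T → Bool) (hf : ξ t = false) :
    CW ρ ξ = (1 - ρ) * ∏ s ∈ univ.erase t, cw ρ (ξ s) := by
  unfold CW
  rw [← Finset.mul_prod_erase univ _ (Finset.mem_univ t), hf, cw_false]

lemma CW_split' (h0 : 0 ≤ ρ) (h1 : ρ ≤ 1) (t : Fin T) (ξ : Fin T → Bool) :
    CW ρ (Function.update ξ t true) = ρ * ∏ s ∈ univ.erase t, cw ρ (ξ s) := by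
  unfold CW
  rw [← Finset.mul_prod_erase univ _ (Finset.mem_univ t), Function.update_self, cw_true]
  congr 1
  apply Finset.prod_congr rfl
  intro s hs
  rw [Function.update_of_ne (Finset.ne_of_mem_erase hs)]

/-- Key per-round bound: expected policy reward at round `t` is at most
`1 - ρ` plus `ρ` times the probability that the budget is exhausted. -/
lemma sum_g_le (h0 : 0 ≤ ρ) (h1 : ρ ≤ 1) (t : Fin T) :
    ∑ ξ : Fin T → Bool, CW ρ ξ * gfun π ρ M ξ t
      ≤ (1 - ρ) + ρ * ∑ ξ : Fin T → Bool, CW ρ ξ * (if M ≤ rawB ξ t then (1:ℝ) else 0) := by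
  have key : ∀ G : (Fin T → Bool) → ℝ,
      ∑ ξ : Fin T → Bool, G ξ
        = ∑ ξ ∈ univ.filter (fun ξ : Fin T → Bool => ξ t = false),
            (G ξ + G (Function.update ξ t true)) := by
    intro G
    rw [Finset.sum_add_distrib, ← sum_flip t G, Finset.sum_filter_add_sum_filter_not]
  rw [key (fun ξ => CW ρ ξ * gfun π ρ M ξ t)]
  have upd_raw : ∀ ξ : Fin T → Bool, rawB (Function.update ξ t true) t = rawB ξ t := fun ξ =>
    (rawB_congr fun s hs => (Function.update_of_ne (ne_of_lt hs) true ξ).symm).symm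
  have rhs_eq : (1 - ρ) + ρ * ∑ ξ : Fin T → Bool, CW ρ ξ * (if M ≤ rawB ξ t then (1:ℝ) else 0)
      = ∑ ξ ∈ univ.filter (fun ξ : Fin T → Bool => ξ t = false),
          (∏ s ∈ univ.erase t, cw ρ (ξ s))
            * ((1 - ρ) + ρ * (if M ≤ rawB ξ t then (1:ℝ) else 0)) := by
    have h1' : ∑ ξ : Fin T → Bool,
        CW ρ ξ * ((1 - ρ) + ρ * (if M ≤ rawB ξ t then (1:ℝ) else 0))
        = (1 - ρ) + ρ * ∑ ξ : Fin T → Bool, CW ρ ξ * (if M ≤ rawB ξ t then (1:ℝ) else 0) := by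
      have e1 : ∀ ξ : Fin T → Bool,
          CW ρ ξ * ((1 - ρ) + ρ * (if M ≤ rawB ξ t then (1:ℝ) else 0))
          = CW ρ ξ * (1 - ρ) + ρ * (CW ρ ξ * (if M ≤ rawB ξ t then (1:ℝ) else 0)) := by
        intro ξ; ring
      rw [Finset.sum_congr rfl fun ξ _ => e1 ξ, Finset.sum_add_distrib, ← Finset.sum_mul,
        ← Finset.mul_sum, sum_CW, one_mul]
    rw [← h1', key (fun ξ => CW ρ ξ *
      ((1 - ρ) + ρ * (if M ≤ rawB ξ t then (1:ℝ) else 0)))]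
    apply Finset.sum_congr rfl
    intro ξ hξ
    have hf : ξ t = false := by simpa using (Finset.mem_filter.1 hξ).2
    rw [CW_split ρ h0 h1 t ξ hf, CW_split' ρ h0 h1 t ξ, upd_raw ξ]
    ring
  rw [rhs_eq]
  apply Finset.sum_le_sum
  intro ξ hξ
  have hf : ξ t = false := by simpa using (Finset.mem_filter.1 hξ).2
  have hK : 0 ≤ ∏ s ∈ univ.erase t, cw ρ (ξ s) :=
    Finset.prod_nonneg fun s _ => cw_nonneg h0 h1 _
  have hpc := pair_core π ρ M h0 h1 ξ t hf
  rw [CW_split ρ h0 h1 t ξ hf, CW_split' ρ h0 h1 t ξ]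
  have hlhs : (1 - ρ) * (∏ s ∈ univ.erase t, cw ρ (ξ s)) * gfun π ρ M ξ t
      + ρ * (∏ s ∈ univ.erase t, cw ρ (ξ s)) * gfun π ρ M (Function.update ξ t true) t
      = (∏ s ∈ univ.erase t, cw ρ (ξ s))
        * ((1 - ρ) * gfun π ρ M ξ t + ρ * gfun π ρ M (Function.update ξ t true) t) := by
    ring
  rw [hlhs]
  exact mul_le_mul_of_nonneg_left hpc hK

end Pairing

end Thm2Aux
namespace Thm2Aux
open MeasureTheory Finset

section Analysis

variable {T : ℕ} (π : Policy T) (ρ : ℝ) (M : ℕ)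

lemma CX_eq (ξ : Fin T → Bool) : CX ρ ξ = (rawN ξ : ℝ) - ρ * T := by
  unfold CX cx rawN
  rw [Finset.sum_sub_distrib, Finset.sum_const, Finset.sum_boole]
  simp [mul_comm]

lemma sum_G_le (h0 : 0 ≤ ρ) (h1 : ρ ≤ 1) :
    ∑ ξ : Fin T → Bool, CW ρ ξ * Gfun π ρ M ξ
      ≤ (1 - ρ) * T + ρ * ∑ t : Fin T, ∑ ξ : Fin T → Bool,
          CW ρ ξ * (if M ≤ rawB ξ t then (1:ℝ) else 0) := by
  have swap : ∑ ξ : Fin T → Bool, CW ρ ξ * Gfun π ρ M ξ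
      = ∑ t : Fin T, ∑ ξ : Fin T → Bool, CW ρ ξ * gfun π ρ M ξ t := by
    unfold Gfun
    rw [Finset.sum_congr rfl fun ξ _ => Finset.mul_sum _ _ _, Finset.sum_comm]
  rw [swap]
  calc ∑ t : Fin T, ∑ ξ : Fin T → Bool, CW ρ ξ * gfun π ρ M ξ t
      ≤ ∑ t : Fin T, ((1 - ρ) + ρ * ∑ ξ : Fin T → Bool,
          CW ρ ξ * (if M ≤ rawB ξ t then (1:ℝ) else 0)) :=
        Finset.sum_le_sum fun t _ => sum_g_le π ρ M h0 h1 t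
    _ = (1 - ρ) * T + ρ * ∑ t : Fin T, ∑ ξ : Fin T → Bool,
          CW ρ ξ * (if M ≤ rawB ξ t then (1:ℝ) else 0) := by
        rw [Finset.sum_add_distrib, Finset.sum_const, ← Finset.mul_sum]
        simp [mul_comm]

lemma exh_le (h0 : 0 ≤ ρ) (h1 : ρ ≤ 1) (hρT : 0 < ρ * T)
    (hM : 17 * (ρ * T) ≤ (M : ℝ)) (t : Fin T) :
    ∑ ξ : Fin T → Bool, CW ρ ξ * (if M ≤ rawB ξ t then (1:ℝ) else 0)
      ≤ (T * (ρ * (1 - ρ))) / (16 * (ρ * T))^2 := by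
  have hc : (0:ℝ) < (16 * (ρ * T))^2 := by positivity
  have hpt : ∀ ξ : Fin T → Bool, (if M ≤ rawB ξ t then (1:ℝ) else 0)
      ≤ (CX ρ ξ)^2 / (16 * (ρ * T))^2 := by
    intro ξ
    by_cases h : M ≤ rawB ξ t
    · rw [if_pos h]
      have h2 : (M : ℝ) ≤ rawN ξ := by
        calc (M:ℝ) ≤ rawB ξ t := Nat.cast_le.2 h
          _ ≤ rawN ξ := Nat.cast_le.2 (rawB_le_rawN ξ t)
      have h3 : 16 * (ρ * T) ≤ CX ρ ξ := by
        rw [CX_eq]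
        linarith
      rw [le_div_iff₀ hc, one_mul]
      exact pow_le_pow_left₀ (by positivity) h3 2
    · rw [if_neg h]
      positivity
  calc ∑ ξ : Fin T → Bool, CW ρ ξ * (if M ≤ rawB ξ t then (1:ℝ) else 0)
      ≤ ∑ ξ : Fin T → Bool, CW ρ ξ * ((CX ρ ξ)^2 / (16 * (ρ * T))^2) :=
        Finset.sum_le_sum fun ξ _ =>
          mul_le_mul_of_nonneg_left (hpt ξ) (CW_nonneg h0 h1 ξ)
    _ = (∑ ξ : Fin T → Bool, CW ρ ξ * (CX ρ ξ)^2) / (16 * (ρ * T))^2 := by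
        rw [Finset.sum_div]
        exact Finset.sum_congr rfl fun ξ _ => by ring
    _ = (T * (ρ * (1 - ρ))) / (16 * (ρ * T))^2 := by
        rw [sum_CW_CX_sq h0 h1]

lemma abs_eq_maxs (x : ℝ) : |x| = max x 0 + max (-x) 0 := by
  rcases le_total 0 x with h | h
  · rw [abs_of_nonneg h, max_eq_left h, max_eq_right (neg_nonpos.2 h), add_zero]
  · rw [abs_of_nonpos h, max_eq_right h, max_eq_left (neg_nonneg.2 h), zero_add]

lemma maxs_sub (x : ℝ) : max x 0 - max (-x) 0 = x := by
  rcases le_total 0 x with h | h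
  · rw [max_eq_left h, max_eq_right (neg_nonpos.2 h), sub_zero]
  · rw [max_eq_right h, max_eq_left (neg_nonneg.2 h), zero_sub, neg_neg]

lemma harvest (h0 : 0 ≤ ρ) (h1 : ρ ≤ 1)
    (hu : (4:ℝ)/25 ≤ (T : ℝ) * (ρ * (1 - ρ))) :
    (9/592) * Real.sqrt ((T : ℝ) * (ρ * (1 - ρ)))
      ≤ ∑ ξ : Fin T → Bool, CW ρ ξ * max (ρ * T - rawN ξ) 0 := by
  set u : ℝ := (T : ℝ) * (ρ * (1 - ρ)) with hudef
  have hu0 : 0 < u := lt_of_lt_of_le (by norm_num) hu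
  set a : ℝ := Real.sqrt u / 2 with hadef
  have ha0 : 0 < a := by
    rw [hadef]
    have := Real.sqrt_pos.2 hu0
    linarith
  have hsq : a^2 = u / 4 := by
    rw [hadef, div_pow, Real.sq_sqrt hu0.le]
    norm_num
  -- replace the max by -CX
  have hrw : ∀ ξ : Fin T → Bool, max (ρ * T - rawN ξ) 0 = max (-(CX ρ ξ)) 0 := by
    intro ξ
    rw [CX_eq]
    ring_nf
  rw [Finset.sum_congr rfl fun ξ _ => by rw [hrw ξ]]
  set POS : ℝ := ∑ ξ : Fin T → Bool, CW ρ ξ * max (-(CX ρ ξ)) 0 with hPOS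
  set NEG : ℝ := ∑ ξ : Fin T → Bool, CW ρ ξ * max (CX ρ ξ) 0 with hNEG
  have hdiff : NEG - POS = 0 := by
    rw [hNEG, hPOS, ← Finset.sum_sub_distrib]
    have : ∀ ξ : Fin T → Bool,
        CW ρ ξ * max (CX ρ ξ) 0 - CW ρ ξ * max (-(CX ρ ξ)) 0 = CW ρ ξ * CX ρ ξ := by
      intro ξ
      rw [← mul_sub, maxs_sub]
    rw [Finset.sum_congr rfl fun ξ _ => this ξ, sum_CW_CX]
  have habs : ∑ ξ : Fin T → Bool, CW ρ ξ * |CX ρ ξ| = 2 * POS := by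
    have : ∀ ξ : Fin T → Bool, CW ρ ξ * |CX ρ ξ|
        = CW ρ ξ * max (CX ρ ξ) 0 + CW ρ ξ * max (-(CX ρ ξ)) 0 := by
      intro ξ
      rw [← mul_add, ← abs_eq_maxs]
    rw [Finset.sum_congr rfl fun ξ _ => this ξ, Finset.sum_add_distrib, ← hNEG, ← hPOS]
    linarith
  -- the tail probability
  set P : ℝ := ∑ ξ : Fin T → Bool, CW ρ ξ * (if a ≤ |CX ρ ξ| then (1:ℝ) else 0) with hPdef
  have hP0 : 0 ≤ P := Finset.sum_nonneg fun ξ _ => mul_nonneg (CW_nonneg h0 h1 ξ)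
    (by split <;> norm_num)
  -- |CX| ≥ a * indicator pointwise
  have hmarkov : a * P ≤ 2 * POS := by
    rw [← habs, hPdef, Finset.mul_sum]
    apply Finset.sum_le_sum
    intro ξ _
    have hCW := CW_nonneg h0 h1 ξ
    by_cases h : a ≤ |CX ρ ξ|
    · rw [if_pos h]
      calc a * (CW ρ ξ * 1) = CW ρ ξ * a := by ring
        _ ≤ CW ρ ξ * |CX ρ ξ| := mul_le_mul_of_nonneg_left h hCW
    · rw [if_neg h]
      have := abs_nonneg (CX ρ ξ)
      nlinarith
  -- second moment split: Q := restricted second moment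
  set Q : ℝ := ∑ ξ : Fin T → Bool,
      CW ρ ξ * (CX ρ ξ)^2 * (if a ≤ |CX ρ ξ| then (1:ℝ) else 0) with hQdef
  have hQlb : 3 * u / 4 ≤ Q := by
    have hsplit : u ≤ a^2 + Q := by
      have h2 : ∑ ξ : Fin T → Bool, CW ρ ξ * (CX ρ ξ)^2 = u := by
        rw [sum_CW_CX_sq h0 h1, hudef]
      rw [← h2, hQdef]
      have hCWsum : ∑ ξ : Fin T → Bool, CW ρ ξ * a^2 = a^2 := by
        rw [← Finset.sum_mul, sum_CW, one_mul]
      calc ∑ ξ : Fin T → Bool, CW ρ ξ * (CX ρ ξ)^2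
          ≤ ∑ ξ : Fin T → Bool, (CW ρ ξ * a^2
              + CW ρ ξ * (CX ρ ξ)^2 * (if a ≤ |CX ρ ξ| then (1:ℝ) else 0)) := by
            apply Finset.sum_le_sum
            intro ξ _
            have hCW := CW_nonneg h0 h1 ξ
            by_cases h : a ≤ |CX ρ ξ|
            · rw [if_pos h, mul_one]
              nlinarith [sq_nonneg a]
            · rw [if_neg h, mul_zero, add_zero]
              push_neg at h
              have h' : (CX ρ ξ)^2 ≤ a^2 := by
                have := abs_nonneg (CX ρ ξ)
                nlinarith [sq_abs (CX ρ ξ)]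
              exact mul_le_mul_of_nonneg_left h' hCW
        _ = a^2 + Q := by
            rw [Finset.sum_add_distrib, hCWsum, hQdef]
    nlinarith [hsq]
  -- Cauchy--Schwarz / Paley--Zygmund
  have hCS : Q^2 ≤ (3*u^2 + u) * P := by
    have hcs := Finset.sum_sq_le_sum_mul_sum_of_sq_eq_mul
      (Finset.univ : Finset (Fin T → Bool))
      (r := fun ξ => CW ρ ξ * (CX ρ ξ)^2 * (if a ≤ |CX ρ ξ| then (1:ℝ) else 0))
      (f := fun ξ => CW ρ ξ * (CX ρ ξ)^4)
      (g := fun ξ => CW ρ ξ * (if a ≤ |CX ρ ξ| then (1:ℝ) else 0))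
      (fun ξ _ => mul_nonneg (CW_nonneg h0 h1 ξ) (by positivity))
      (fun ξ _ => mul_nonneg (CW_nonneg h0 h1 ξ) (by split <;> norm_num))
      (fun ξ _ => by
        by_cases h : a ≤ |CX ρ ξ|
        · rw [if_pos h]; ring
        · rw [if_neg h]; ring)
    have hE4 := sum_CW_CX_four (ρ := ρ) (n := T) h0 h1
    have hsum4 : ∑ ξ : Fin T → Bool, CW ρ ξ * (CX ρ ξ)^4 ≤ 3*u^2 + u := by
      calc ∑ ξ : Fin T → Bool, CW ρ ξ * (CX ρ ξ)^4
          ≤ 3 * ((T : ℝ) * (ρ * (1-ρ)))^2 + (T : ℝ) * (ρ * (1-ρ)) := hE4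
        _ = 3*u^2 + u := by rw [hudef]
    calc Q^2 ≤ (∑ ξ : Fin T → Bool, CW ρ ξ * (CX ρ ξ)^4) * P := hcs
      _ ≤ (3*u^2 + u) * P := by
          apply mul_le_mul_of_nonneg_right hsum4 hP0
  -- conclude : P ≥ 9/148
  have hPlb : 9/148 ≤ P := by
    nlinarith [hQlb, hCS, hu, hu0, hP0, sq_nonneg u, sq_nonneg (u - 4/25), mul_pos hu0 hu0]
  -- finish
  have hsqrt : Real.sqrt u = 2 * a := by rw [hadef]; ring
  rw [hsqrt]
  nlinarith [hmarkov, hPlb, ha0, mul_le_mul_of_nonneg_left hPlb ha0.le]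

end Analysis

end Thm2Aux
namespace Thm2Aux
open MeasureTheory Finset

theorem thm2_lower_aux :
    ∃ c : ℝ, 0 < c ∧
      ∀ (T : ℕ), 1 ≤ T → ∀ L q : ℝ, 1 ≤ L → L ≤ (T : ℝ) → 1 ≤ q →
        ∀ π : Policy T,
          ∃ env : Env T, env.v = (fun _ => 1) ∧ Admissible env q ∧
            (∑ t : Fin T, env.σ t) ≤ L ∧
            c * ((T : ℝ) * L) ^ ((1 : ℝ) / 4) ≤ Regret π env := by
  refine ⟨1/500, by norm_num, ?_⟩
  intro T hT L q hL1 hLT hq π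
  have hT0 : (0:ℝ) < T := by exact_mod_cast hT
  have hL0 : (0:ℝ) < L := by linarith
  have hT1 : (1:ℝ) ≤ (T:ℝ) := by exact_mod_cast hT
  have hTL1 : (1:ℝ) ≤ (T:ℝ) * L := by nlinarith [hT1, hL1]
  set ρ : ℝ := Real.sqrt (L / (T:ℝ)) / 5 with hρdef
  have hratio0 : 0 < L / (T:ℝ) := div_pos hL0 hT0
  have hratio1 : L / (T:ℝ) ≤ 1 := (div_le_one hT0).2 hLT
  have hsρ1 : Real.sqrt (L / (T:ℝ)) ≤ 1 := Real.sqrt_le_one.2 hratio1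
  have hρpos : 0 < ρ := by
    rw [hρdef]
    have := Real.sqrt_pos.2 hratio0
    linarith
  have hρ15 : ρ ≤ 1/5 := by rw [hρdef]; linarith
  have hρ1 : ρ ≤ 1 := by linarith
  have hρsq : ρ^2 = L / (T:ℝ) / 25 := by
    rw [hρdef, div_pow, Real.sq_sqrt hratio0.le]
    norm_num
  set W : ℝ := Real.sqrt ((T:ℝ) * L) with hWdef
  have hW1 : 1 ≤ W := by
    rw [hWdef, show (1:ℝ) = Real.sqrt 1 from Real.sqrt_one.symm]
    exact Real.sqrt_le_sqrt hTL1
  have hρT : ρ * T = W / 5 := by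
    have h2 : (L/(T:ℝ)) * (T:ℝ)^2 = (T:ℝ) * L := by field_simp
    have h3 : Real.sqrt (L/(T:ℝ)) * (T:ℝ) = W := by
      calc Real.sqrt (L/(T:ℝ)) * (T:ℝ) = Real.sqrt (L/(T:ℝ)) * Real.sqrt ((T:ℝ)^2) := by
            rw [Real.sqrt_sq hT0.le]
        _ = Real.sqrt ((L/(T:ℝ)) * (T:ℝ)^2) := (Real.sqrt_mul hratio0.le _).symm
        _ = W := by rw [h2, hWdef]
    rw [hρdef, div_mul_eq_mul_div, h3]
  have hρT0 : 0 < ρ * (T:ℝ) := mul_pos hρpos hT0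
  set M : ℕ := ⌈(17:ℝ) * (ρ * T)⌉₊ with hMdef
  have hM1 : 17 * (ρ * (T:ℝ)) ≤ (M:ℝ) := Nat.le_ceil _
  have hM2 : (M:ℝ) ≤ 17 * (ρ * (T:ℝ)) + 1 := by
    have := Nat.ceil_lt_add_one (by positivity : (0:ℝ) ≤ 17 * (ρ * T))
    rw [hMdef]
    linarith
  clear_value ρ M W
  -- bound on the variance-scale u
  have huW : (4/25) * W ≤ (T:ℝ) * (ρ * (1 - ρ)) := by
    have h5 : (T:ℝ) * (ρ * (1 - ρ)) = (ρ * T) * (1 - ρ) := by ring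
    rw [h5, hρT]
    nlinarith [hW1, hρ15, hρpos]
  have hu : (4:ℝ)/25 ≤ (T:ℝ) * (ρ * (1 - ρ)) := by nlinarith [hW1, huW]
  -- expectation of the regret lower-bound functional
  set D : (Fin T → Bool) → ℝ := fun ξ =>
    (1 - ρ) * T + max (ρ * T - rawN ξ) 0 - Gfun π ρ M ξ with hDdef
  clear_value D
  have hED : (9/592) * Real.sqrt ((T:ℝ) * (ρ * (1 - ρ))) - 1/256
      ≤ ∑ ξ : Fin T → Bool, CW ρ ξ * D ξ := by
    have hsplit : ∑ ξ : Fin T → Bool, CW ρ ξ * D ξ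
        = (1 - ρ) * T + (∑ ξ : Fin T → Bool, CW ρ ξ * max (ρ * T - rawN ξ) 0)
          - ∑ ξ : Fin T → Bool, CW ρ ξ * Gfun π ρ M ξ := by
      have e1 : ∀ ξ : Fin T → Bool, CW ρ ξ * D ξ
          = CW ρ ξ * ((1 - ρ) * T) + CW ρ ξ * max (ρ * T - rawN ξ) 0
            - CW ρ ξ * Gfun π ρ M ξ := by
        intro ξ; simp only [hDdef]; ring
      rw [Finset.sum_congr rfl fun ξ _ => e1 ξ, Finset.sum_sub_distrib,
        Finset.sum_add_distrib, ← Finset.sum_mul, sum_CW, one_mul]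
    rw [hsplit]
    have hharv := harvest (T := T) (ρ := ρ) hρpos.le hρ1 hu
    have hexh : ∑ ξ : Fin T → Bool, CW ρ ξ * Gfun π ρ M ξ ≤ (1 - ρ) * T + 1/256 := by
      have hG := sum_G_le π ρ M hρpos.le hρ1
      have hE : ρ * ∑ t : Fin T, ∑ ξ : Fin T → Bool,
          CW ρ ξ * (if M ≤ rawB ξ t then (1:ℝ) else 0) ≤ 1/256 := by
        have hper : ∀ t : Fin T, ∑ ξ : Fin T → Bool,
            CW ρ ξ * (if M ≤ rawB ξ t then (1:ℝ) else 0)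
            ≤ ((T:ℝ) * (ρ * (1 - ρ))) / (16 * (ρ * T))^2 :=
          exh_le ρ M hρpos.le hρ1 hρT0 hM1
        have hsum : ∑ t : Fin T, ∑ ξ : Fin T → Bool,
            CW ρ ξ * (if M ≤ rawB ξ t then (1:ℝ) else 0)
            ≤ (T:ℝ) * (((T:ℝ) * (ρ * (1 - ρ))) / (16 * (ρ * T))^2) := by
          calc ∑ t : Fin T, ∑ ξ : Fin T → Bool,
              CW ρ ξ * (if M ≤ rawB ξ t then (1:ℝ) else 0)
              ≤ ∑ _t : Fin T, ((T:ℝ) * (ρ * (1 - ρ))) / (16 * (ρ * T))^2 :=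
                Finset.sum_le_sum fun t _ => hper t
            _ = (T:ℝ) * (((T:ℝ) * (ρ * (1 - ρ))) / (16 * (ρ * T))^2) := by
                rw [Finset.sum_const]; simp [mul_comm]
        have hval : ρ * ((T:ℝ) * (((T:ℝ) * (ρ * (1 - ρ))) / (16 * (ρ * T))^2))
            = (1 - ρ) / 256 := by
          field_simp
          ring
        calc ρ * ∑ t : Fin T, ∑ ξ : Fin T → Bool,
            CW ρ ξ * (if M ≤ rawB ξ t then (1:ℝ) else 0)
            ≤ ρ * ((T:ℝ) * (((T:ℝ) * (ρ * (1 - ρ))) / (16 * (ρ * T))^2)) :=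
              mul_le_mul_of_nonneg_left hsum hρpos.le
          _ = (1 - ρ) / 256 := hval
          _ ≤ 1/256 := by linarith [hρpos]
      linarith
    linarith
  -- pick the best pattern
  obtain ⟨ξ0, -, hξ0⟩ := Finset.exists_max_image (Finset.univ : Finset (Fin T → Bool)) D
    ⟨fun _ => false, Finset.mem_univ _⟩
  have hDξ0 : (9/592) * Real.sqrt ((T:ℝ) * (ρ * (1 - ρ))) - 1/256 ≤ D ξ0 := by
    refine le_trans hED ?_
    calc ∑ ξ : Fin T → Bool, CW ρ ξ * D ξ
        ≤ ∑ ξ : Fin T → Bool, CW ρ ξ * D ξ0 :=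
          Finset.sum_le_sum fun ξ _ =>
            mul_le_mul_of_nonneg_left (hξ0 ξ (Finset.mem_univ _)) (CW_nonneg hρpos.le hρ1 ξ)
      _ = D ξ0 := by rw [← Finset.sum_mul, sum_CW, one_mul]
  refine ⟨envOf ρ M hρpos.le hρ1 ξ0, rfl, ?_, ?_, ?_⟩
  · -- admissibility
    intro t
    show (∫ _ω : Unit, |(0:ℝ) - mv ρ M ξ0 t| ^ q ∂(Measure.dirac ())) ≤ (mv ρ M ξ0 t) ^ q
    haveI : IsProbabilityMeasure (Measure.dirac () : Measure Unit) := inferInstance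
    rw [integral_const]
    simp only [Measure.real, measure_univ, ENNReal.toReal_one, one_smul]
    rw [zero_sub, abs_neg, abs_of_nonneg (mv_nonneg hρpos.le ξ0 t)]
  · -- budget
    show ∑ t : Fin T, mv ρ M ξ0 t ≤ L
    rw [sum_mv]
    have h1' : (effN M ξ0 : ℝ) ≤ (M:ℝ) := Nat.cast_le.2 (effN_le_M ξ0)
    have h2' : ρ * (effN M ξ0 : ℝ) ≤ ρ * M :=
      mul_le_mul_of_nonneg_left h1' hρpos.le
    have h3' : ρ * (M:ℝ) ≤ 17 * (ρ^2 * T) + ρ := by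
      calc ρ * (M:ℝ) ≤ ρ * (17 * (ρ * T) + 1) := mul_le_mul_of_nonneg_left hM2 hρpos.le
        _ = 17 * (ρ^2 * T) + ρ := by ring
    have h4' : 17 * (ρ^2 * (T:ℝ)) = 17 * L / 25 := by
      rw [hρsq]
      field_simp
    have h5' : ρ ≤ L / 5 := by
      calc ρ ≤ 1/5 := hρ15
        _ ≤ L / 5 := by linarith
    linarith
  · -- the regret bound
    have hreg := regret_ge π ρ M hρpos hρ1 ξ0
    have hTL0 : (0:ℝ) ≤ (T:ℝ) * L := mul_nonneg hT0.le hL0.le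
    have hpow : ((T:ℝ) * L) ^ ((1:ℝ)/4) = Real.sqrt W := by
      rw [hWdef, Real.sqrt_eq_rpow, Real.sqrt_eq_rpow, ← Real.rpow_mul hTL0]
      norm_num
    rw [hpow]
    have hsqrtu : (2/5) * Real.sqrt W ≤ Real.sqrt ((T:ℝ) * (ρ * (1 - ρ))) := by
      have h6 : Real.sqrt ((4/25) * W) ≤ Real.sqrt ((T:ℝ) * (ρ * (1 - ρ))) :=
        Real.sqrt_le_sqrt huW
      have h7 : Real.sqrt ((4/25 : ℝ) * W) = (2/5) * Real.sqrt W := by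
        rw [Real.sqrt_mul (by norm_num), show ((4:ℝ)/25) = (2/5)^2 by norm_num,
          Real.sqrt_sq (by norm_num)]
      linarith
    have hsw : 1 ≤ Real.sqrt W := by
      rw [show (1:ℝ) = Real.sqrt 1 from Real.sqrt_one.symm]
      exact Real.sqrt_le_sqrt hW1
    have hchain : (1/500) * Real.sqrt W ≤ D ξ0 := by
      have : (9/592) * ((2/5) * Real.sqrt W) - 1/256 ≤ D ξ0 := by
        refine le_trans ?_ hDξ0
        have := mul_le_mul_of_nonneg_left hsqrtu (by norm_num : (0:ℝ) ≤ 9/592)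
        linarith
      linarith [hsw]
    calc (1/500) * Real.sqrt W ≤ D ξ0 := hchain
      _ ≤ Regret π (envOf ρ M hρpos.le hρ1 ξ0) := by simp only [hDdef]; exact hreg

end Thm2Aux

/-- **Theorem 2 (lower bound).** In the single-hint model with `v_t ≡ 1`, there is a
universal constant `c > 0` such that for every `T ≥ 1`, `L ∈ [1,T]`, `q ∈ [1,∞)` and
every policy `π`, there is an admissible sequence (with accuracies `σ_t` hidden from
the bidder) satisfying `E[|h_t − m_t|^q] ≤ σ_t^q` and `Σ σ_t ≤ L` on which
`Reg(π) ≥ c·(T·L)^{1/4}`. -/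
theorem thm2_lower :
    ∃ c : ℝ, 0 < c ∧
      ∀ (T : ℕ), 1 ≤ T → ∀ L q : ℝ, 1 ≤ L → L ≤ (T : ℝ) → 1 ≤ q →
        ∀ π : Policy T,
          ∃ env : Env T, env.v = (fun _ => 1) ∧ Admissible env q ∧
            (∑ t : Fin T, env.σ t) ≤ L ∧
            c * ((T : ℝ) * L) ^ ((1 : ℝ) / 4) ≤ Regret π env :=
  Thm2Aux.thm2_lower_aux
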